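/- Let N ≥ 1, let p be a prime with 2N < p, and let m be a natural number with 1 ≤ m. Let T and T' be subsets of the integer interval [1, 2N] with |T| = |T'| = m. If for every i with 1 ≤ i ≤ m one has Σ_{z ∈ T} z^i ≡ Σ_{z ∈ T'} z^i (mod p), then T = T'. (That is, a subset of [1,2N] of known size m is uniquely determined by its first m power sums modulo a prime p > 2N.) -/

import Mathlib

open Polynomial Finset

/-- Newton's identity specialized to a finset of a commutative ring. -/
private lemma newton_finset {K : Type*} [CommRing K] (S : Finset K) (k : ℕ) :
    (k : K) * S.val.esymm k = (-1) ^ (k + 1) *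
      ∑ a ∈ Finset.HasAntidiagonal.antidiagonal k with a.1 < k,
        (-1) ^ a.1 * S.val.esymm a.1 * (∑ z ∈ S, z ^ a.2) := by
  classical
  have h := congrArg (MvPolynomial.aeval (fun x : ↥S => (x : K)))
    (MvPolynomial.mul_esymm_eq_sum ↥S K k)
  have hattach : Multiset.map (fun x : {x // x ∈ S} => (x : K)) S.val.attach = S.val :=
    Multiset.attach_map_val S.val
  have hps : ∀ n, MvPolynomial.aeval (fun x : ↥S => (x : K)) (MvPolynomial.psum ↥S K n)
      = ∑ z ∈ S, z ^ n := by
    intro n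
    simp only [MvPolynomial.psum, map_sum, map_pow, MvPolynomial.aeval_X]
    exact Finset.sum_attach S (fun z => z ^ n)
  simp only [map_mul, map_natCast, map_pow, map_neg, map_one, map_sum,
    MvPolynomial.aeval_esymm_eq_multiset_esymm, Finset.univ_eq_attach, Finset.attach_val,
    hattach, hps] at h
  exact h

private lemma finset_eq_of_psum {K : Type*} [Field K] (m : ℕ) (S S' : Finset K)
    (hS : S.card = m) (hS' : S'.card = m)
    (hchar : ∀ k, 1 ≤ k → k ≤ m → (k : K) ≠ 0)
    (hps : ∀ i, 1 ≤ i → i ≤ m → (∑ z ∈ S, z ^ i) = ∑ z ∈ S', z ^ i) : S = S' := by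
  classical
  have hesymm : ∀ k, k ≤ m → S.val.esymm k = S'.val.esymm k := by
    intro k
    induction k using Nat.strong_induction_on with
    | _ k ih =>
      intro hk
      rcases Nat.eq_zero_or_pos k with h0 | hpos
      · subst h0; simp [Multiset.esymm]
      · have h1 := newton_finset S k
        have h2 := newton_finset S' k
        have key : (k : K) * S.val.esymm k = (k : K) * S'.val.esymm k := by
          rw [h1, h2]
          congr 1
          refine Finset.sum_congr rfl ?_
          intro a ha
          simp only [Finset.mem_filter, Finset.HasAntidiagonal.mem_antidiagonal] at ha
          have ha2pos : 1 ≤ a.2 := by omega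
          have ha2le : a.2 ≤ m := by omega
          rw [ih a.1 (by omega) (by omega), hps a.2 ha2pos ha2le]
        exact mul_left_cancel₀ (hchar k hpos hk) key
  have hprod : (S.val.map fun t => X - C t).prod = (S'.val.map fun t => X - C t).prod := by
    rw [Multiset.prod_X_sub_X_eq_sum_esymm, Multiset.prod_X_sub_X_eq_sum_esymm]
    have hc : Multiset.card S.val = Multiset.card S'.val := by
      simp [hS, hS']
    rw [hc]
    refine Finset.sum_congr rfl ?_
    intro j hj
    simp only [Finset.mem_range] at hj
    have : j ≤ m := by
      have : Multiset.card S'.val = m := by simpa using hS'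
      omega
    rw [hesymm j this]
  have := congrArg Polynomial.roots hprod
  rw [Polynomial.roots_multiset_prod_X_sub_C, Polynomial.roots_multiset_prod_X_sub_C] at this
  exact Finset.val_inj.mp this

/-- A subset of `[1, 2N]` of known size `m` is uniquely determined by its
first `m` power sums modulo a prime `p > 2N`. -/
theorem eq_of_power_sums_modEq
    (N p m : ℕ) (hN : 1 ≤ N) (hp : p.Prime) (hpN : 2 * N < p) (hm : 1 ≤ m)
    (T T' : Finset ℕ)
    (hTsub : T ⊆ Finset.Icc 1 (2 * N)) (hT'sub : T' ⊆ Finset.Icc 1 (2 * N))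
    (hT : T.card = m) (hT' : T'.card = m)
    (hsums : ∀ i, 1 ≤ i → i ≤ m →
      (∑ z ∈ T, z ^ i) ≡ (∑ z ∈ T', z ^ i) [MOD p]) :
    T = T' := by
  classical
  haveI : Fact p.Prime := ⟨hp⟩
  have hm2N : m ≤ 2 * N := by
    have := Finset.card_le_card hTsub
    simpa [hT] using this
  have hinj : ∀ a ∈ Finset.Icc 1 (2 * N), ∀ b ∈ Finset.Icc 1 (2 * N),
      ((a : ZMod p) = (b : ZMod p)) → a = b := by
    intro a ha b hb hab
    simp only [Finset.mem_Icc] at ha hb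
    have h := (ZMod.natCast_eq_natCast_iff a b p).mp hab
    exact Nat.ModEq.eq_of_lt_of_lt h (by omega) (by omega)
  have hinjT : Set.InjOn (fun n : ℕ => (n : ZMod p)) ↑T := fun a ha b hb h =>
    hinj a (hTsub ha) b (hTsub hb) h
  have hinjT' : Set.InjOn (fun n : ℕ => (n : ZMod p)) ↑T' := fun a ha b hb h =>
    hinj a (hT'sub ha) b (hT'sub hb) h
  have hSeq : T.image (fun n : ℕ => (n : ZMod p)) = T'.image (fun n : ℕ => (n : ZMod p)) := by
    refine finset_eq_of_psum m _ _ ?_ ?_ ?_ ?_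
    · rw [Finset.card_image_of_injOn hinjT, hT]
    · rw [Finset.card_image_of_injOn hinjT', hT']
    · intro k hk1 hkm
      intro h
      have hd := (ZMod.natCast_eq_zero_iff k p).mp h
      have := Nat.le_of_dvd (by omega) hd
      omega
    · intro i hi1 him
      have h1 : (∑ z ∈ T.image (fun n : ℕ => (n : ZMod p)), z ^ i)
          = ((∑ z ∈ T, z ^ i : ℕ) : ZMod p) := by
        rw [Finset.sum_image hinjT]; push_cast; rfl
      have h2 : (∑ z ∈ T'.image (fun n : ℕ => (n : ZMod p)), z ^ i)
          = ((∑ z ∈ T', z ^ i : ℕ) : ZMod p) := by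
        rw [Finset.sum_image hinjT']; push_cast; rfl
      rw [h1, h2]
      exact (ZMod.natCast_eq_natCast_iff _ _ _).mpr (hsums i hi1 him)
  ext a
  constructor
  · intro ha
    have h : (a : ZMod p) ∈ T'.image (fun n : ℕ => (n : ZMod p)) := by
      rw [← hSeq]; exact Finset.mem_image_of_mem _ ha
    obtain ⟨b, hb, hba⟩ := Finset.mem_image.mp h
    rwa [hinj b (hT'sub hb) a (hTsub ha) hba] at hb
  · intro ha
    have h : (a : ZMod p) ∈ T.image (fun n : ℕ => (n : ZMod p)) := by
      rw [hSeq]; exact Finset.mem_image_of_mem _ ha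
    obtain ⟨b, hb, hba⟩ := Finset.mem_image.mp h
    rwa [hinj b (hTsub hb) a (hT'sub ha) hba] at hb
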